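/- Let V be a finite type and let P be a superset-closed predicate on finite subsets of V such that the full vertex set V is a P-set. For R ⊆ V, the map ν_R sending S to the symmetric difference S ⊖ R is a well-defined graph automorphism of the P-TAR graph (in particular S ⊖ R is a P-set for every P-set S) if and only if R is P-irrelevant. -/

import Mathlib

/-- The TAR (token addition/removal) graph of a predicate `P` on finite subsets of `V`:
vertices are the `P`-sets, two `P`-sets being adjacent iff their symmetric difference
has exactly one element. -/
def tarGraph {V : Type*} [DecidableEq V] (P : Finset V → Prop) :
    SimpleGraph {S : Finset V // P S} where
  Adj S T := (symmDiff S.1 T.1).card = 1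
  symm := ⟨by intro S T h; show (symmDiff T.1 S.1).card = 1; rw [symmDiff_comm]; exact h⟩
  loopless := ⟨by intro S h; simp [symmDiff_self] at h⟩

/-- `S` is a minimal `P`-set: `S` is a `P`-set and no proper subset of `S` is a `P`-set. -/
def IsMinimalPSet {V : Type*} (P : Finset V → Prop) (S : Finset V) : Prop :=
  P S ∧ ∀ T : Finset V, T ⊂ S → ¬ P T

/-- `R` is `P`-irrelevant: no minimal `P`-set contains any vertex of `R`. -/
def IsIrrelevant {V : Type*} (P : Finset V → Prop) (R : Finset V) : Prop :=
  ∀ S : Finset V, IsMinimalPSet P S → ∀ v ∈ R, v ∉ S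


private lemma exists_minimal_pset {V : Type*} [DecidableEq V] (P : Finset V → Prop) :
    ∀ S : Finset V, P S → ∃ M, M ⊆ S ∧ IsMinimalPSet P M := by
  intro S
  induction S using Finset.strongInduction with
  | _ S ih =>
    intro hS
    by_cases h : ∃ T, T ⊂ S ∧ P T
    · obtain ⟨T, hT, hPT⟩ := h
      obtain ⟨M, hMT, hM⟩ := ih T hT hPT
      exact ⟨M, hMT.trans hT.subset, hM⟩
    · push_neg at h
      exact ⟨S, Finset.Subset.refl S, hS, h⟩

/-- For a superset-closed predicate `P` with the full vertex set a `P`-set,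
the map `ν_R : S ↦ S ⊖ R` is a well-defined graph automorphism of the `P`-TAR
graph if and only if `R` is `P`-irrelevant. -/
theorem nuR_automorphism_iff_irrelevant {V : Type*} [Fintype V] [DecidableEq V]
    (P : Finset V → Prop)
    (hP : ∀ S T : Finset V, P S → S ⊆ T → P T)
    (huniv : P Finset.univ)
    (R : Finset V) :
    (∃ φ : tarGraph P ≃g tarGraph P,
        ∀ S : {S : Finset V // P S}, (φ S).1 = symmDiff S.1 R)
      ↔ IsIrrelevant P R := by

  constructor
  · rintro ⟨φ, hφ⟩ M hM v hvR hvM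
    have hPMR : P (M ∪ R) := hP M _ hM.1 Finset.subset_union_left
    have h2 : P (symmDiff (M ∪ R) R) := by
      have := (φ ⟨M ∪ R, hPMR⟩).2
      rwa [hφ] at this
    have heq : symmDiff (M ∪ R) R = M \ R := by
      ext x
      simp only [Finset.mem_symmDiff, Finset.mem_union, Finset.mem_sdiff]
      tauto
    rw [heq] at h2
    have hss : M \ R ⊂ M :=
      (Finset.ssubset_iff_of_subset Finset.sdiff_subset).mpr
        ⟨v, hvM, by simp [hvR]⟩
    exact hM.2 (M \ R) hss h2
  · intro hIrr
    have key : ∀ S : Finset V, P S → P (symmDiff S R) := by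
      intro S hS
      obtain ⟨M, hMS, hM⟩ := exists_minimal_pset P S hS
      refine hP M _ hM.1 ?_
      intro x hx
      rw [Finset.mem_symmDiff]
      exact Or.inl ⟨hMS hx, fun hxR => hIrr M hM x hxR hx⟩
    have hcancel : ∀ S : Finset V, symmDiff (symmDiff S R) R = S := fun S =>
      symmDiff_symmDiff_cancel_right R S
    refine ⟨⟨⟨fun S => ⟨symmDiff S.1 R, key _ S.2⟩,
        fun S => ⟨symmDiff S.1 R, key _ S.2⟩,
        fun S => Subtype.ext (hcancel S.1),
        fun S => Subtype.ext (hcancel S.1)⟩, ?_⟩, fun S => rfl⟩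
    intro S T
    show (symmDiff (symmDiff S.1 R) (symmDiff T.1 R)).card = 1 ↔ _
    have : symmDiff (symmDiff S.1 R) (symmDiff T.1 R) = symmDiff S.1 T.1 := by
      ext x
      simp only [Finset.mem_symmDiff]
      tauto
    rw [this]
    rfl
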